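/- Let H be a real Hilbert space and T a bounded skew-adjoint operator on H which is invertible with ‖T‖ = 1. Then the spectrum of the unitary operator exp(πT) is contained in the unit circle minus the point 1; equivalently, ‖exp(πT) + I‖ < 2. -/

import Mathlib

open scoped RealInnerProductSpace
open NormedSpace

private lemma fact_ge (n : ℕ) : 6 * 4 ^ n ≤ Nat.factorial (n + 3) := by
  induction n with
  | zero => simp [Nat.factorial]
  | succ k ih =>
    have h : Nat.factorial (k + 1 + 3) = (k + 4) * Nat.factorial (k + 3) := rfl
    rw [h]
    calc 6 * 4 ^ (k + 1) = 4 * (6 * 4 ^ k) := by ring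
    _ ≤ 4 * Nat.factorial (k + 3) := Nat.mul_le_mul_left _ ih
    _ ≤ (k + 4) * Nat.factorial (k + 3) := Nat.mul_le_mul_right _ (by omega)

private lemma key_series {H : Type*} [NormedAddCommGroup H] [InnerProductSpace ℝ H]
    [CompleteSpace H] (a : H →L[ℝ] H) (hna : ‖a‖ ≤ 8 / 5) (x : H) :
    (26 / 45 : ℝ) * ‖a x‖ ^ 2 ≤ ⟪(exp a - exp (-a)) x, a x⟫ := by
  classical
  set v := a x with hv
  set g : ℕ → H := fun n => ((n.factorial : ℝ)⁻¹ • a ^ n) x - ((n.factorial : ℝ)⁻¹ • (-a) ^ n) x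
    with hg
  have hsum1 : Summable fun n : ℕ => ((n.factorial : ℝ)⁻¹ • a ^ n) :=
    NormedSpace.expSeries_summable' a
  have hsum2 : Summable fun n : ℕ => ((n.factorial : ℝ)⁻¹ • (-a) ^ n) :=
    NormedSpace.expSeries_summable' (-a)
  have happ1 : exp a x = ∑' n : ℕ, ((n.factorial : ℝ)⁻¹ • a ^ n) x := by
    rw [NormedSpace.exp_eq_tsum (𝕂 := ℝ)]
    exact (ContinuousLinearMap.apply ℝ H x).map_tsum hsum1
  have happ2 : exp (-a) x = ∑' n : ℕ, ((n.factorial : ℝ)⁻¹ • (-a) ^ n) x := by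
    rw [NormedSpace.exp_eq_tsum (𝕂 := ℝ)]
    exact (ContinuousLinearMap.apply ℝ H x).map_tsum hsum2
  have hsg1 : Summable fun n : ℕ => ((n.factorial : ℝ)⁻¹ • a ^ n) x :=
    hsum1.map (ContinuousLinearMap.apply ℝ H x) (ContinuousLinearMap.apply ℝ H x).continuous
  have hsg2 : Summable fun n : ℕ => ((n.factorial : ℝ)⁻¹ • (-a) ^ n) x :=
    hsum2.map (ContinuousLinearMap.apply ℝ H x) (ContinuousLinearMap.apply ℝ H x).continuous
  have hsg : Summable g := hsg1.sub hsg2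
  have hDx : (exp a - exp (-a)) x = ∑' n, g n := by
    simp only [ContinuousLinearMap.sub_apply, happ1, happ2, hg]
    exact (Summable.tsum_sub hsg1 hsg2).symm
  set c : ℕ → ℝ := fun n => ⟪g n, v⟫ with hc
  have hinner : ⟪(exp a - exp (-a)) x, v⟫ = ∑' n, c n := by
    rw [hDx, real_inner_comm]
    calc ⟪v, ∑' n, g n⟫ = (innerSL ℝ v) (∑' n, g n) := rfl
    _ = ∑' n, (innerSL ℝ v) (g n) := (innerSL ℝ v).map_tsum hsg
    _ = ∑' n, c n := tsum_congr fun n => (real_inner_comm v (g n)).symm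
  have hsc : Summable c :=
    ((hsg.map (innerSL ℝ v) (innerSL ℝ v).continuous)).congr fun n => real_inner_comm _ _
  have hc0 : c 0 = 0 := by simp [hc, hg]
  have hc1 : c 1 = 2 * ‖v‖ ^ 2 := by
    simp only [hc, hg, pow_one, Nat.factorial_one, Nat.cast_one, inv_one, one_smul,
      ContinuousLinearMap.neg_apply, sub_neg_eq_add, ← hv]
    rw [← two_smul ℝ v, real_inner_smul_left, real_inner_self_eq_norm_sq]
  have hc2 : c 2 = 0 := by
    have h2 : (-a) ^ 2 = a ^ 2 := by rw [neg_pow]; norm_num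
    simp [hc, hg, h2]
  -- operator power bound
  have hpow : ∀ (m : ℕ) (y : H), ‖(a ^ m) y‖ ≤ ‖a‖ ^ m * ‖y‖ := by
    intro m
    induction m with
    | zero => intro y; simp
    | succ k ih =>
      intro y
      have h : (a ^ (k + 1)) y = (a ^ k) (a y) := by rw [pow_succ]; rfl
      rw [h]
      calc ‖(a ^ k) (a y)‖ ≤ ‖a‖ ^ k * ‖a y‖ := ih (a y)
      _ ≤ ‖a‖ ^ k * (‖a‖ * ‖y‖) :=
          mul_le_mul_of_nonneg_left (a.le_opNorm y) (by positivity)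
      _ = ‖a‖ ^ (k + 1) * ‖y‖ := by ring
  have hbound : ∀ n : ℕ, |c (n + 3)| ≤ 64 / 75 * (2 / 5) ^ n * ‖v‖ ^ 2 := by
    intro n
    have hneg : ‖((-a) ^ (n + 3)) x‖ = ‖(a ^ (n + 3)) x‖ := by
      rcases Nat.even_or_odd (n + 3) with he | ho
      · rw [he.neg_pow]
      · rw [ho.neg_pow, ContinuousLinearMap.neg_apply, norm_neg]
    have hax : ‖(a ^ (n + 3)) x‖ ≤ ‖a‖ ^ (n + 2) * ‖v‖ := by
      have h : (a ^ (n + 3)) x = (a ^ (n + 2)) (a x) := by rw [pow_succ]; rfl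
      rw [h, ← hv]; exact hpow (n + 2) v
    have hgn : ‖g (n + 3)‖ ≤ ((n + 3).factorial : ℝ)⁻¹ * (2 * (‖a‖ ^ (n + 2) * ‖v‖)) := by
      calc ‖g (n + 3)‖ ≤ ‖(((n + 3).factorial : ℝ)⁻¹ • a ^ (n + 3)) x‖ +
          ‖(((n + 3).factorial : ℝ)⁻¹ • (-a) ^ (n + 3)) x‖ := norm_sub_le _ _
      _ = ((n + 3).factorial : ℝ)⁻¹ * ‖(a ^ (n + 3)) x‖ +
          ((n + 3).factorial : ℝ)⁻¹ * ‖((-a) ^ (n + 3)) x‖ := by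
          simp [norm_smul, abs_of_nonneg]
      _ = ((n + 3).factorial : ℝ)⁻¹ * (‖(a ^ (n + 3)) x‖ + ‖(a ^ (n + 3)) x‖) := by
          rw [hneg]; ring
      _ ≤ ((n + 3).factorial : ℝ)⁻¹ * (2 * (‖a‖ ^ (n + 2) * ‖v‖)) := by
          apply mul_le_mul_of_nonneg_left _ (by positivity)
          linarith [hax]
    have hfac : ((6 : ℝ) * 4 ^ n)⁻¹ ≥ (((n + 3).factorial : ℝ))⁻¹ := by
      apply inv_anti₀ (by positivity)
      exact_mod_cast fact_ge n
    calc |c (n + 3)| ≤ ‖g (n + 3)‖ * ‖v‖ := abs_real_inner_le_norm _ _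
    _ ≤ ((n + 3).factorial : ℝ)⁻¹ * (2 * (‖a‖ ^ (n + 2) * ‖v‖)) * ‖v‖ :=
        mul_le_mul_of_nonneg_right hgn (norm_nonneg _)
    _ ≤ ((6 : ℝ) * 4 ^ n)⁻¹ * (2 * ((8 / 5) ^ (n + 2) * ‖v‖)) * ‖v‖ := by
        have h1 : ‖a‖ ^ (n + 2) ≤ (8 / 5 : ℝ) ^ (n + 2) :=
          pow_le_pow_left₀ (norm_nonneg _) hna _
        have h2 : (0:ℝ) ≤ ‖v‖ := norm_nonneg _
        apply mul_le_mul_of_nonneg_right _ h2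
        apply mul_le_mul hfac _ (by positivity) (by positivity)
        exact mul_le_mul_of_nonneg_left (mul_le_mul_of_nonneg_right h1 h2) (by norm_num)
    _ = 64 / 75 * (2 / 5) ^ n * ‖v‖ ^ 2 := by
        have h8 : (8:ℝ) ^ n = 2 ^ n * 4 ^ n := by rw [← mul_pow]; norm_num
        field_simp
        ring_nf
        rw [div_pow, div_pow, h8]; ring
  have hgeo : Summable fun n : ℕ => 64 / 75 * (2 / 5 : ℝ) ^ n * ‖v‖ ^ 2 := by
    apply Summable.mul_right
    exact (summable_geometric_of_lt_one (by norm_num) (by norm_num)).mul_left _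
  have htail : Summable fun n : ℕ => c (n + 3) := (summable_nat_add_iff 3).mpr hsc
  have htail_abs : Summable fun n : ℕ => |c (n + 3)| := htail.abs
  have hgeo_sum : ∑' n : ℕ, 64 / 75 * (2 / 5 : ℝ) ^ n * ‖v‖ ^ 2 = 64 / 45 * ‖v‖ ^ 2 := by
    rw [tsum_mul_right, tsum_mul_left, tsum_geometric_of_lt_one (by norm_num) (by norm_num)]
    norm_num
  have htail_bound : |∑' n, c (n + 3)| ≤ 64 / 45 * ‖v‖ ^ 2 := by
    calc |∑' n, c (n + 3)| ≤ ∑' n, |c (n + 3)| := by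
          simpa [Real.norm_eq_abs] using norm_tsum_le_tsum_norm (f := fun n => c (n + 3))
            (by simpa [Real.norm_eq_abs] using htail_abs)
    _ ≤ ∑' n : ℕ, 64 / 75 * (2 / 5 : ℝ) ^ n * ‖v‖ ^ 2 := Summable.tsum_le_tsum hbound htail_abs hgeo
    _ = 64 / 45 * ‖v‖ ^ 2 := hgeo_sum
  have hsplit : ∑ i ∈ Finset.range 3, c i + ∑' n, c (n + 3) = ∑' n, c n :=
    Summable.sum_add_tsum_nat_add 3 hsc
  have hrange : ∑ i ∈ Finset.range 3, c i = 2 * ‖v‖ ^ 2 := by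
    rw [Finset.sum_range_succ, Finset.sum_range_succ, Finset.sum_range_one, hc0, hc1, hc2]
    ring
  rw [hinner, ← hsplit, hrange]
  have := abs_le.mp htail_bound
  linarith [this.1]

set_option maxHeartbeats 1000000 in
/-- If `T` is a bounded skew-adjoint invertible operator of norm 1 on a real
Hilbert space, then the unitary `exp(πT)` has spectrum avoiding `1`; equivalently
`‖exp(πT) + I‖ < 2`. -/
theorem stmt3 {H : Type*} [NormedAddCommGroup H] [InnerProductSpace ℝ H] [CompleteSpace H]
    (T : H →L[ℝ] H)
    (ha : ContinuousLinearMap.adjoint T = -T)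
    (hinv : IsUnit T) (hn : ‖T‖ = 1) :
    ‖NormedSpace.exp (Real.pi • T) + 1‖ < 2 := by
  have hπ : Real.pi < 3.2 := lt_trans Real.pi_lt_d2 (by norm_num)
  have hπ3 : 3 < Real.pi := Real.pi_gt_three
  set a : H →L[ℝ] H := (Real.pi / 2) • T with ha_def
  have hna : ‖a‖ ≤ 8 / 5 := by
    have h1 : ‖a‖ = ‖(Real.pi / 2 : ℝ)‖ * ‖T‖ := by rw [ha_def]; exact norm_smul (Real.pi / 2) T
    rw [h1, hn, mul_one, Real.norm_eq_abs, abs_of_pos (by positivity)]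
    linarith
  set V := exp a with hV
  set W := exp (-a) with hW
  have hcomm : Commute a (-a) := (Commute.refl a).neg_right
  have hexpadd : ∀ x y : H →L[ℝ] H, Commute x y → exp (x + y) = exp x * exp y :=
    fun x y h => NormedSpace.exp_add_of_commute_of_mem_ball (𝕂 := ℝ) h
      (by rw [NormedSpace.expSeries_radius_eq_top, Metric.mem_eball]; exact edist_lt_top _ _)
      (by rw [NormedSpace.expSeries_radius_eq_top, Metric.mem_eball]; exact edist_lt_top _ _)
  have hWV : W * V = 1 := by
    rw [hW, hV, ← hexpadd _ _ hcomm.symm, neg_add_cancel,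
      NormedSpace.exp_zero]
  have hVW : V * W = 1 := by
    rw [hW, hV, ← hexpadd _ _ hcomm, add_neg_cancel, NormedSpace.exp_zero]
  have hstara : star a = -a := by
    rw [ha_def, star_smul, star_trivial, ContinuousLinearMap.star_eq_adjoint, ha, smul_neg]
  have hstarV : star V = W := by rw [hV, hW, NormedSpace.star_exp, hstara]
  have hstarW : star W = V := by rw [← hstarV, star_star]
  -- V and W are isometries
  have hiso : ∀ U Us : H →L[ℝ] H, star U = Us → Us * U = 1 → ∀ x : H, ‖U x‖ = ‖x‖ := by
    intro U Us hS h1 x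
    have h2 : ⟪x, (ContinuousLinearMap.adjoint U) (U x)⟫ = ⟪U x, U x⟫ :=
      ContinuousLinearMap.adjoint_inner_right U x (U x)
    rw [← ContinuousLinearMap.star_eq_adjoint, hS] at h2
    have h3 : Us (U x) = x := by
      rw [← ContinuousLinearMap.mul_apply, h1, ContinuousLinearMap.one_apply]
    rw [h3] at h2
    have h4 : ‖U x‖ * ‖U x‖ = ‖x‖ * ‖x‖ := by
      rw [← real_inner_self_eq_norm_mul_norm, ← real_inner_self_eq_norm_mul_norm, h2]
    exact (mul_self_inj (norm_nonneg _) (norm_nonneg _)).mp h4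
  have hVx : ∀ x, ‖V x‖ = ‖x‖ := hiso V W hstarV hWV
  have hWx : ∀ x, ‖W x‖ = ‖x‖ := hiso W V hstarW hVW
  -- lower bound for ‖T x‖
  obtain ⟨u, hu⟩ := hinv
  set S : H →L[ℝ] H := ↑u⁻¹ with hSdef
  have hST : ∀ x, S (T x) = x := by
    intro x
    have h1 : S * T = 1 := by rw [hSdef, ← hu]; exact u.inv_mul
    rw [← ContinuousLinearMap.mul_apply, h1, ContinuousLinearMap.one_apply]
  have hTlow : ∀ x : H, ‖x‖ ≤ ‖S‖ * ‖T x‖ := by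
    intro x
    calc ‖x‖ = ‖S (T x)‖ := by rw [hST]
    _ ≤ ‖S‖ * ‖T x‖ := S.le_opNorm _
  have hT0 : T ≠ 0 := fun h => by simp [h] at hn
  obtain ⟨x₀, hx₀⟩ : ∃ x, T x ≠ 0 := by
    by_contra h
    push_neg at h
    exact hT0 (ContinuousLinearMap.ext fun x => by simp [h x])
  have hx₀0 : x₀ ≠ 0 := fun h => hx₀ (by simp [h])
  have hSpos : 0 < ‖S‖ := by
    rw [norm_pos_iff]
    intro h
    apply hx₀0
    rw [← hST x₀, h, ContinuousLinearMap.zero_apply]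
  set κ : ℝ := (26 / 45) * ‖S‖⁻¹ with hκ
  have hκpos : 0 < κ := by positivity
  -- lower bound for ‖(V - W) x‖
  have hD : ∀ x : H, κ * ‖x‖ ≤ ‖(V - W) x‖ := by
    intro x
    have hax : ‖a x‖ = Real.pi / 2 * ‖T x‖ := by
      rw [ha_def, ContinuousLinearMap.smul_apply, norm_smul, Real.norm_eq_abs,
        abs_of_pos (by positivity)]
    have haxT : ‖T x‖ ≤ ‖a x‖ := by rw [hax]; nlinarith [norm_nonneg (T x)]
    have hxa : ‖S‖⁻¹ * ‖x‖ ≤ ‖a x‖ := by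
      have := hTlow x
      rw [inv_mul_le_iff₀ hSpos]
      linarith [haxT, mul_le_mul_of_nonneg_left haxT (le_of_lt hSpos)]
    rcases (norm_nonneg (a x)).eq_or_lt with h0 | hpos
    · have hx0 : ‖x‖ = 0 := by nlinarith [hxa, norm_nonneg x, inv_pos.mpr hSpos, h0.symm.le]
      rw [hx0, mul_zero]
      exact norm_nonneg _
    · have hkey := key_series a hna x
      have hcs : ⟪(V - W) x, a x⟫ ≤ ‖(V - W) x‖ * ‖a x‖ := real_inner_le_norm _ _
      have h1 : (26 / 45 : ℝ) * ‖a x‖ ≤ ‖(V - W) x‖ := by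
        have h2 : (26 / 45 : ℝ) * ‖a x‖ * ‖a x‖ ≤ ‖(V - W) x‖ * ‖a x‖ := by
          calc (26 / 45 : ℝ) * ‖a x‖ * ‖a x‖ = (26 / 45) * ‖a x‖ ^ 2 := by ring
          _ ≤ ⟪(V - W) x, a x⟫ := hkey
          _ ≤ ‖(V - W) x‖ * ‖a x‖ := hcs
        exact le_of_mul_le_mul_right h2 hpos
      calc κ * ‖x‖ = (26 / 45) * (‖S‖⁻¹ * ‖x‖) := by rw [hκ]; ring
      _ ≤ (26 / 45) * ‖a x‖ := mul_le_mul_of_nonneg_left hxa (by norm_num)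
      _ ≤ ‖(V - W) x‖ := h1
  -- parallelogram law
  have hC : ∀ x : H, ‖(V + W) x‖ * ‖(V + W) x‖ ≤ (4 - κ ^ 2) * ‖x‖ ^ 2 := by
    intro x
    have hpar := parallelogram_law_with_norm ℝ (V x) (W x)
    have hD2 : κ * ‖x‖ * (κ * ‖x‖) ≤ ‖(V - W) x‖ * ‖(V - W) x‖ :=
      mul_self_le_mul_self (by positivity) (hD x)
    have hVWx : (V + W) x = V x + W x := rfl
    have hVWx' : (V - W) x = V x - W x := rfl
    rw [hVWx'] at hD2
    rw [hVx x, hWx x] at hpar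
    rw [hVWx]
    nlinarith [hpar, hD2, sq_nonneg ‖x‖]
  have h4κ : 0 ≤ 4 - κ ^ 2 := by
    have h1 := hC x₀
    have hx₀n : 0 < ‖x₀‖ := norm_pos_iff.mpr hx₀0
    by_contra hneg
    push_neg at hneg
    nlinarith [mul_self_nonneg ‖(V + W) x₀‖, mul_pos hx₀n hx₀n]
  -- conclude
  have hCnorm : ‖V + W‖ ≤ Real.sqrt (4 - κ ^ 2) := by
    apply ContinuousLinearMap.opNorm_le_bound _ (Real.sqrt_nonneg _)
    intro x
    have h1 : ‖(V + W) x‖ ^ 2 ≤ (Real.sqrt (4 - κ ^ 2) * ‖x‖) ^ 2 := by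
      have : (Real.sqrt (4 - κ ^ 2) * ‖x‖) ^ 2 = (4 - κ ^ 2) * ‖x‖ ^ 2 := by
        rw [mul_pow, Real.sq_sqrt h4κ]
      rw [this, sq]
      exact hC x
    calc ‖(V + W) x‖ = Real.sqrt (‖(V + W) x‖ ^ 2) := (Real.sqrt_sq (norm_nonneg _)).symm
    _ ≤ Real.sqrt ((Real.sqrt (4 - κ ^ 2) * ‖x‖) ^ 2) := Real.sqrt_le_sqrt h1
    _ = Real.sqrt (4 - κ ^ 2) * ‖x‖ := Real.sqrt_sq (by positivity)
  have hfactor : exp (Real.pi • T) + 1 = V * (V + W) := by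
    rw [mul_add, hVW, hV, ← hexpadd _ _ (Commute.refl a)]
    have h2 : a + a = Real.pi • T := by
      rw [ha_def, ← add_smul]
      congr 1
      ring
    rw [h2]
  have hfin : ‖V * (V + W)‖ ≤ ‖V + W‖ :=
    ContinuousLinearMap.opNorm_le_bound _ (norm_nonneg _) fun x => by
      rw [ContinuousLinearMap.mul_apply, hVx]
      exact (V + W).le_opNorm x
  have hlt : Real.sqrt (4 - κ ^ 2) < 2 := by
    have h2 : (2 : ℝ) = Real.sqrt 4 := by
      rw [show (4 : ℝ) = 2 ^ 2 by norm_num, Real.sqrt_sq (by norm_num : (0:ℝ) ≤ 2)]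
    rw [h2]
    apply Real.sqrt_lt_sqrt h4κ
    nlinarith [hκpos]
  calc ‖NormedSpace.exp (Real.pi • T) + 1‖ = ‖V * (V + W)‖ := by rw [hfactor]
  _ ≤ ‖V + W‖ := hfin
  _ ≤ Real.sqrt (4 - κ ^ 2) := hCnorm
  _ < 2 := hlt
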